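/- Let M₁ and M₂ be D×D nonsingular integer matrices, let G₁ be a gcld of M₁ and M₂, and let P₁, P₂ be integer matrices satisfying M₁P₁ + M₂P₂ = G₁. Suppose r₁ and r₂ are the remainders of a common integer vector, i.e., there exists an integer vector m with m ≡ r₁ mod M₁ and m ≡ r₂ mod M₂. Then m₁ = M₂P₂G₁⁻¹r₁ + M₁P₁G₁⁻¹r₂ is an integer vector and satisfies m₁ ≡ r₁ mod M₁ and m₁ ≡ r₂ mod M₂. -/

import Mathlib

open Matrix

/-- An integer matrix is unimodular if its determinant is `1` or `-1`. -/
def Unimod {D : ℕ} (U : Matrix (Fin D) (Fin D) ℤ) : Prop := U.det = 1 ∨ U.det = -1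

/-- `C` is a common right multiple (crm) of the family `M`. -/
def IsCRM {D n : ℕ} (M : Fin n → Matrix (Fin D) (Fin D) ℤ)
    (C : Matrix (Fin D) (Fin D) ℤ) : Prop :=
  C.det ≠ 0 ∧ ∀ i, ∃ Q : Matrix (Fin D) (Fin D) ℤ, C = M i * Q

/-- `C` is a least common right multiple (lcrm) of the family `M`. -/
def IsLCRM {D n : ℕ} (M : Fin n → Matrix (Fin D) (Fin D) ℤ)
    (C : Matrix (Fin D) (Fin D) ℤ) : Prop :=
  IsCRM M C ∧ ∀ C', IsCRM M C' → ∃ P : Matrix (Fin D) (Fin D) ℤ, C' = C * P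

/-- `C` is a common left multiple (clm) of the family `M`. -/
def IsCLM {D n : ℕ} (M : Fin n → Matrix (Fin D) (Fin D) ℤ)
    (C : Matrix (Fin D) (Fin D) ℤ) : Prop :=
  C.det ≠ 0 ∧ ∀ i, ∃ Q : Matrix (Fin D) (Fin D) ℤ, C = Q * M i

/-- `C` is a least common left multiple (lclm) of the family `M`. -/
def IsLCLM {D n : ℕ} (M : Fin n → Matrix (Fin D) (Fin D) ℤ)
    (C : Matrix (Fin D) (Fin D) ℤ) : Prop :=
  IsCLM M C ∧ ∀ C', IsCLM M C' → ∃ P : Matrix (Fin D) (Fin D) ℤ, C' = P * C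

/-- `B` is a common left divisor (cld) of the family `M`. -/
def IsCLD {D n : ℕ} (M : Fin n → Matrix (Fin D) (Fin D) ℤ)
    (B : Matrix (Fin D) (Fin D) ℤ) : Prop :=
  B.det ≠ 0 ∧ ∀ i, ∃ K : Matrix (Fin D) (Fin D) ℤ, M i = B * K

/-- `B` is a greatest common left divisor (gcld) of the family `M`:
`B` is a cld, and every cld of the family is a left divisor of `B`. -/
def IsGCLD {D n : ℕ} (M : Fin n → Matrix (Fin D) (Fin D) ℤ)
    (B : Matrix (Fin D) (Fin D) ℤ) : Prop :=
  IsCLD M B ∧ ∀ B', IsCLD M B' → ∃ K : Matrix (Fin D) (Fin D) ℤ, B = B' * K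

/-- `A` and `B` are left coprime: every (nonsingular) common left divisor is unimodular. -/
def LeftCoprime {D : ℕ} (A B : Matrix (Fin D) (Fin D) ℤ) : Prop :=
  ∀ C : Matrix (Fin D) (Fin D) ℤ, C.det ≠ 0 →
    (∃ K, A = C * K) → (∃ K, B = C * K) → Unimod C

/-- `A` and `B` are right coprime: every (nonsingular) common right divisor is unimodular. -/
def RightCoprime {D : ℕ} (A B : Matrix (Fin D) (Fin D) ℤ) : Prop :=
  ∀ C : Matrix (Fin D) (Fin D) ℤ, C.det ≠ 0 →
    (∃ K, A = K * C) → (∃ K, B = K * C) → Unimod C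

/-- `A` and `B` are coprime (for commuting matrices left and right coprimeness coincide). -/
def MatCoprime {D : ℕ} (A B : Matrix (Fin D) (Fin D) ℤ) : Prop :=
  LeftCoprime A B ∧ RightCoprime A B

/-- The lattice generated by an integer matrix `M`: all integer combinations `M n`. -/
def LAT {D : ℕ} (M : Matrix (Fin D) (Fin D) ℤ) : Set (Fin D → ℤ) :=
  {v | ∃ n : Fin D → ℤ, v = M.mulVec n}

/-- `𝒩(M)`: the integer vectors of the form `M x` with `x ∈ [0,1)^D`. -/
def NSet {D : ℕ} (M : Matrix (Fin D) (Fin D) ℤ) : Set (Fin D → ℤ) :=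
  {k | ∃ x : Fin D → ℚ, (∀ j, 0 ≤ x j ∧ x j < 1) ∧
      (M.map (Int.cast : ℤ → ℚ)).mulVec x = fun j => (k j : ℚ)}

/-- `r` is the remainder of `m` modulo `M`: `r ∈ 𝒩(M)` and `m − r ∈ LAT(M)`. -/
def IsRem {D : ℕ} (M : Matrix (Fin D) (Fin D) ℤ) (m r : Fin D → ℤ) : Prop :=
  r ∈ NSet M ∧ (m - r) ∈ LAT M

/-- The Euclidean norm on `ℝ^D`. -/
noncomputable def euclNorm {D : ℕ} (v : Fin D → ℝ) : ℝ := Real.sqrt (∑ j, (v j) ^ 2)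

/-- The lattice generated by a real matrix `M`: all integer combinations `M n`. -/
def LATR {D : ℕ} (M : Matrix (Fin D) (Fin D) ℝ) : Set (Fin D → ℝ) :=
  {v | ∃ n : Fin D → ℤ, v = M.mulVec (fun j => (n j : ℝ))}


private lemma cast_mulVec' {D : ℕ} (A : Matrix (Fin D) (Fin D) ℤ) (v : Fin D → ℤ) :
    (fun j => ((A.mulVec v) j : ℚ)) = (A.map (Int.cast : ℤ → ℚ)).mulVec (fun j => (v j : ℚ)) :=
  funext fun i => RingHom.map_mulVec (Int.castRingHom ℚ) A v i

private lemma rat_identity {D : ℕ} (M₁ M₂ G₁ P₁ P₂ : Matrix (Fin D) (Fin D) ℤ)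
    (hGdet : G₁.det ≠ 0)
    (hBez : M₁ * P₁ + M₂ * P₂ = G₁)
    (r₁ r₂ s : Fin D → ℤ)
    (hrs : r₁ - r₂ = G₁.mulVec s) :
    (fun j => (((r₁ - (M₁ * P₁).mulVec s)) j : ℚ)) =
        ((M₂ * P₂).map (Int.cast : ℤ → ℚ) * (G₁.map (Int.cast : ℤ → ℚ))⁻¹).mulVec
            (fun j => (r₁ j : ℚ)) +
          ((M₁ * P₁).map (Int.cast : ℤ → ℚ) * (G₁.map (Int.cast : ℤ → ℚ))⁻¹).mulVec
            (fun j => (r₂ j : ℚ)) := by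
  set Gq := G₁.map (Int.cast : ℤ → ℚ) with hGq
  set A := (M₁ * P₁).map (Int.cast : ℤ → ℚ) with hA
  set B := (M₂ * P₂).map (Int.cast : ℤ → ℚ) with hB
  set r₁q : Fin D → ℚ := fun j => (r₁ j : ℚ)
  set r₂q : Fin D → ℚ := fun j => (r₂ j : ℚ)
  set sq : Fin D → ℚ := fun j => (s j : ℚ)
  have hdet : IsUnit Gq.det := by
    have h : Gq.det = (G₁.det : ℚ) := ((Int.castRingHom ℚ).map_det G₁).symm
    rw [isUnit_iff_ne_zero, h]
    exact_mod_cast hGdet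
  have hBezq : A + B = Gq := by
    rw [hA, hB, hGq, ← hBez]; simp [Matrix.map_add]
  have hrsq : r₁q - r₂q = Gq.mulVec sq := by
    have h := cast_mulVec' G₁ s
    rw [← hrs] at h
    rw [hGq]; rw [← h]; funext j; simp; rfl
  have hsq : Gq⁻¹.mulVec (r₁q - r₂q) = sq := by
    rw [hrsq, Matrix.mulVec_mulVec, Matrix.nonsing_inv_mul _ hdet, Matrix.one_mulVec]
  have hBeq : B = Gq - A := by rw [← hBezq]; abel
  rw [hBeq]
  have lhs : (fun j => (((r₁ - (M₁ * P₁).mulVec s)) j : ℚ)) = r₁q - A.mulVec sq := by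
    funext j
    have h := congrFun (cast_mulVec' (M₁ * P₁) s) j
    simp only [Pi.sub_apply]
    rw [Int.cast_sub, h, hA]
  rw [lhs, ← hsq]
  rw [Matrix.sub_mul, Matrix.sub_mulVec, Matrix.mul_nonsing_inv _ hdet, Matrix.one_mulVec,
    Matrix.mulVec_sub, ← Matrix.mulVec_mulVec, ← Matrix.mulVec_mulVec, Matrix.mulVec_sub]
  abel

/-- `m₁ = M₂P₂G₁⁻¹r₁ + M₁P₁G₁⁻¹r₂` is an integer vector solving both
congruences `m₁ ≡ r₁ mod M₁`, `m₁ ≡ r₂ mod M₂`. -/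
theorem stmt2 {D : ℕ} (M₁ M₂ G₁ P₁ P₂ : Matrix (Fin D) (Fin D) ℤ)
    (h₁ : M₁.det ≠ 0) (h₂ : M₂.det ≠ 0)
    (hG : IsGCLD ![M₁, M₂] G₁)
    (hBez : M₁ * P₁ + M₂ * P₂ = G₁)
    (m r₁ r₂ : Fin D → ℤ)
    (hc₁ : (m - r₁) ∈ LAT M₁) (hc₂ : (m - r₂) ∈ LAT M₂) :
    ∃ m₁ : Fin D → ℤ,
      (fun j => (m₁ j : ℚ)) =
        ((M₂ * P₂).map (Int.cast : ℤ → ℚ) * (G₁.map (Int.cast : ℤ → ℚ))⁻¹).mulVec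
            (fun j => (r₁ j : ℚ)) +
          ((M₁ * P₁).map (Int.cast : ℤ → ℚ) * (G₁.map (Int.cast : ℤ → ℚ))⁻¹).mulVec
            (fun j => (r₂ j : ℚ)) ∧
      (m₁ - r₁) ∈ LAT M₁ ∧ (m₁ - r₂) ∈ LAT M₂ := by
  obtain ⟨⟨hGdet, hGdvd⟩, -⟩ := hG
  obtain ⟨K₁, hK₁⟩ := hGdvd 0
  obtain ⟨K₂, hK₂⟩ := hGdvd 1
  simp only [Matrix.cons_val_zero] at hK₁
  simp only [Matrix.cons_val_one, Matrix.head_cons, Matrix.cons_val_zero] at hK₂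
  obtain ⟨n₁, hn₁⟩ := hc₁
  obtain ⟨n₂, hn₂⟩ := hc₂
  set s : Fin D → ℤ := K₂.mulVec n₂ - K₁.mulVec n₁ with hs
  have hrs : r₁ - r₂ = G₁.mulVec s := by
    have h : r₁ - r₂ = (m - r₂) - (m - r₁) := by abel
    rw [h, hn₁, hn₂, hK₁, hK₂, hs, Matrix.mulVec_sub, Matrix.mulVec_mulVec, Matrix.mulVec_mulVec]
  refine ⟨r₁ - (M₁ * P₁).mulVec s, rat_identity M₁ M₂ G₁ P₁ P₂ hGdet hBez r₁ r₂ s hrs, ?_, ?_⟩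
  · exact ⟨-(P₁.mulVec s), by rw [Matrix.mulVec_neg, Matrix.mulVec_mulVec]; abel⟩
  · refine ⟨P₂.mulVec s, ?_⟩
    have h : r₁ - (M₁ * P₁).mulVec s - r₂ = G₁.mulVec s - (M₁ * P₁).mulVec s := by
      rw [← hrs]; abel
    rw [h, Matrix.mulVec_mulVec, ← Matrix.sub_mulVec, ← hBez, add_sub_cancel_left]
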